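/- Let p be a prime with p ≠ 2 and p ≠ 5, and let e = ν_p(F(p−ε)). If m ≡ n (mod π(p)), then F(m) ≡ F(n) (mod p^e). -/

import Mathlib

open Nat

/-- Cassini's identity. -/
lemma cassini_aux (n : ℕ) :
    (Nat.fib n : ℤ) * (Nat.fib (n + 2) : ℤ) + (-1) ^ n = (Nat.fib (n + 1) : ℤ) ^ 2 := by
  induction n with
  | zero => simp
  | succ k ih =>
    have h1 : Nat.fib (k + 3) = Nat.fib (k + 1) + Nat.fib (k + 2) := Nat.fib_add_two
    have h2 : Nat.fib (k + 2) = Nat.fib k + Nat.fib (k + 1) := Nat.fib_add_two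
    rw [h2] at ih
    rw [show k + 1 + 2 = k + 3 from rfl, h1, h2]
    push_cast at ih ⊢
    linear_combination -ih

/-- Expansion of `fib (a * t)` modulo `fib a ^ 2`. -/
lemma fib_mul_modEq (a : ℕ) (ha : 1 ≤ a) (s : ℕ) :
    Nat.fib (a * (s + 1)) ≡ (s + 1) * Nat.fib a * Nat.fib (a - 1) ^ s [MOD Nat.fib a ^ 2] ∧
    Nat.fib (a * (s + 1) + 1) ≡
      Nat.fib (a - 1) ^ (s + 1) + (s + 1) * Nat.fib a * Nat.fib (a - 1) ^ s
        [MOD Nat.fib a ^ 2] := by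
  have e3 : Nat.fib (a + 1) = Nat.fib (a - 1) + Nat.fib a := by
    conv_lhs => rw [show a + 1 = (a - 1) + 2 by omega]
    rw [Nat.fib_add_two, show a - 1 + 1 = a by omega]
  have hA2 : ((Nat.fib a : ZMod (Nat.fib a ^ 2))) ^ 2 = 0 := by
    have h0 : ((Nat.fib a ^ 2 : ℕ) : ZMod (Nat.fib a ^ 2)) = 0 := ZMod.natCast_self _
    push_cast at h0
    exact h0
  induction s with
  | zero =>
    refine ⟨by simpa using Nat.ModEq.refl _, ?_⟩
    have hbase : Nat.fib (a * (0 + 1) + 1) =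
        Nat.fib (a - 1) ^ (0 + 1) + (0 + 1) * Nat.fib a * Nat.fib (a - 1) ^ 0 := by
      simp [e3]
    exact hbase ▸ Nat.ModEq.refl _
  | succ s ih =>
    obtain ⟨ihu, ihv⟩ := ih
    have e1 : Nat.fib (a * (s + 1 + 1)) =
        Nat.fib (a * (s + 1)) * Nat.fib (a - 1) + Nat.fib (a * (s + 1) + 1) * Nat.fib a := by
      have h := Nat.fib_add (a * (s + 1)) (a - 1)
      rw [show a - 1 + 1 = a by omega] at h
      rw [show a * (s + 1 + 1) = a * (s + 1) + (a - 1) + 1 by rw [Nat.mul_succ]; omega]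
      exact h
    have e2 : Nat.fib (a * (s + 1 + 1) + 1) =
        Nat.fib (a * (s + 1)) * Nat.fib a + Nat.fib (a * (s + 1) + 1) * Nat.fib (a + 1) := by
      have h := Nat.fib_add (a * (s + 1)) a
      rw [show a * (s + 1 + 1) + 1 = a * (s + 1) + a + 1 by rw [Nat.mul_succ]]
      exact h
    rw [← ZMod.natCast_eq_natCast_iff] at ihu ihv
    push_cast at ihu ihv
    constructor
    · rw [← ZMod.natCast_eq_natCast_iff, e1]
      push_cast
      rw [ihu, ihv]
      linear_combination ((s : ZMod (Nat.fib a ^ 2)) + 1) *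
        ((Nat.fib (a - 1) : ZMod (Nat.fib a ^ 2)) ^ s) * hA2
    · rw [← ZMod.natCast_eq_natCast_iff, e2, e3]
      push_cast
      rw [ihu, ihv]
      linear_combination (2 * (s : ZMod (Nat.fib a ^ 2)) + 2) *
        ((Nat.fib (a - 1) : ZMod (Nat.fib a ^ 2)) ^ s) * hA2
/-- The step map of the Fibonacci recurrence, as a permutation of pairs mod `p`. -/
def fibPerm (p : ℕ) : Equiv.Perm (ZMod p × ZMod p) where
  toFun x := (x.2, x.1 + x.2)
  invFun x := (x.2 - x.1, x.1)
  left_inv x := by simp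
  right_inv x := by simp

lemma fibPerm_pow (p : ℕ) (n : ℕ) :
    ((fibPerm p) ^ n) ((0 : ZMod p), (1 : ZMod p)) =
      ((Nat.fib n : ZMod p), (Nat.fib (n + 1) : ZMod p)) := by
  induction n with
  | zero => simp
  | succ k ih =>
    rw [_root_.pow_succ', Equiv.Perm.mul_apply, ih]
    simp only [fibPerm, Equiv.coe_fn_mk]
    rw [Nat.fib_add_two]
    push_cast
    rfl

/-- The pisano set is nonempty. -/
lemma pisano_set_nonempty (p : ℕ) (hp : p.Prime) :
    Set.Nonempty {m | 1 ≤ m ∧ ∀ n, Nat.fib (n + m) ≡ Nat.fib n [MOD p]} := by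
  haveI : NeZero p := ⟨hp.pos.ne'⟩
  refine ⟨orderOf (fibPerm p), orderOf_pos _, fun n => ?_⟩
  have h1 : ((fibPerm p) ^ (n + orderOf (fibPerm p))) ((0 : ZMod p), (1 : ZMod p)) =
      ((fibPerm p) ^ n) ((0 : ZMod p), (1 : ZMod p)) := by
    rw [pow_add, Equiv.Perm.mul_apply, pow_orderOf_eq_one]
    rfl
  rw [fibPerm_pow, fibPerm_pow] at h1
  have h2 : ((Nat.fib (n + orderOf (fibPerm p)) : ZMod p)) = (Nat.fib n : ZMod p) :=
    congrArg Prod.fst h1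
  exact (ZMod.natCast_eq_natCast_iff _ _ _).mp h2

/-- The Pisano period of the Fibonacci sequence modulo `p`: the least `m ≥ 1`
with `F (n + m) ≡ F n (mod p)` for all `n`. -/
noncomputable def pisano (p : ℕ) : ℕ :=
  sInf {m | 1 ≤ m ∧ ∀ n, Nat.fib (n + m) ≡ Nat.fib n [MOD p]}

/-- The natural number `p - ε` for `p ∉ {2, 5}`. -/
def pSubEps (p : ℕ) : ℕ := if p % 5 = 1 ∨ p % 5 = 4 then p - 1 else p + 1

/-- The Wall exponent `e = ν_p (F (p - ε))`. -/
def wallExp (p : ℕ) : ℕ := padicValNat p (Nat.fib (pSubEps p))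
theorem fib_modEq_pow_wallExp_of_modEq_pisano
    (p : ℕ) (hp : p.Prime) (hp2 : p ≠ 2) (hp5 : p ≠ 5)
    (m n : ℕ) (h : m ≡ n [MOD pisano p]) :
    (Nat.fib m : ZMod (p ^ wallExp p)) = (Nat.fib n : ZMod (p ^ wallExp p)) := by
  haveI := Fact.mk hp
  by_cases he0 : wallExp p = 0
  · rw [he0, pow_zero]
    exact Subsingleton.elim _ _
  set e := wallExp p with he
  have he1 : 1 ≤ e := Nat.one_le_iff_ne_zero.mpr he0
  have hp3 : 3 ≤ p := by
    have := hp.two_le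
    omega
  -- the Pisano period
  set P := pisano p with hPdef
  have hPmem : 1 ≤ P ∧ ∀ j, Nat.fib (j + P) ≡ Nat.fib j [MOD p] :=
    Nat.sInf_mem (pisano_set_nonempty p hp)
  obtain ⟨hP1, hPfib⟩ := hPmem
  have hpP : p ∣ Nat.fib P := by
    have h0 := hPfib 0
    simpa using (Nat.modEq_zero_iff_dvd).mp (by simpa using h0)
  -- the rank of apparition
  set T : Set ℕ := {j | 1 ≤ j ∧ p ∣ Nat.fib j} with hT
  have hTne : T.Nonempty := ⟨P, hP1, hpP⟩
  have hαmem : sInf T ∈ T := Nat.sInf_mem hTne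
  set α := sInf T with hα
  obtain ⟨hα1, hpα⟩ := hαmem
  have hαdvd : ∀ k, 1 ≤ k → p ∣ Nat.fib k → α ∣ k := by
    intro k hk1 hpk
    have hg : p ∣ Nat.gcd (Nat.fib α) (Nat.fib k) := Nat.dvd_gcd hpα hpk
    rw [← Nat.fib_gcd] at hg
    have hg1 : 1 ≤ Nat.gcd α k := Nat.gcd_pos_of_pos_left k (by omega)
    have hle : α ≤ Nat.gcd α k := Nat.sInf_le ⟨hg1, hg⟩
    have hge : Nat.gcd α k ≤ α := Nat.le_of_dvd (by omega) (Nat.gcd_dvd_left α k)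
    have : Nat.gcd α k = α := le_antisymm hge hle
    exact this ▸ Nat.gcd_dvd_right α k
  -- divisibility of fib (p - ε)
  have hpe : p ^ e ∣ Nat.fib (pSubEps p) := pow_padicValNat_dvd
  have hp1e : p ∣ Nat.fib (pSubEps p) := by
    calc p = p ^ 1 := (pow_one p).symm
      _ ∣ p ^ e := pow_dvd_pow p he1
      _ ∣ _ := hpe
  have hqcases : pSubEps p = p - 1 ∨ pSubEps p = p + 1 := by
    unfold pSubEps
    split
    · exact Or.inl rfl
    · exact Or.inr rfl
  have hq1 : 1 ≤ pSubEps p := by rcases hqcases with h' | h' <;> omega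
  have hqp : ¬ p ∣ pSubEps p := by
    rcases hqcases with h' | h' <;> rw [h'] <;> intro hd
    · have := Nat.le_of_dvd (by omega) hd
      omega
    · have : p ∣ 1 := (Nat.dvd_add_right dvd_rfl).mp hd
      have := Nat.le_of_dvd (by omega) this
      omega
  obtain ⟨t, ht⟩ := hαdvd _ hq1 hp1e
  have ht1 : 1 ≤ t := by
    rcases Nat.eq_zero_or_pos t with h' | h'
    · rw [h', mul_zero] at ht; omega
    · exact h'
  have hpt : ¬ p ∣ t := fun hd => hqp (ht ▸ Dvd.dvd.mul_left hd α)
  -- the valuation of fib α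
  have hfibα0 : Nat.fib α ≠ 0 := (Nat.fib_pos.mpr (by omega)).ne'
  set f := padicValNat p (Nat.fib α) with hf
  have hf1 : 1 ≤ f := one_le_padicValNat_of_dvd hfibα0 hpα
  have hpd : ¬ p ∣ Nat.fib (α - 1) := by
    intro hd
    have hcop := Nat.fib_coprime_fib_succ (α - 1)
    rw [show α - 1 + 1 = α by omega] at hcop
    have : p ∣ 1 := hcop ▸ Nat.dvd_gcd hd hpα
    have := Nat.le_of_dvd (by omega) this
    omega
  -- e ≤ f
  have hef : e ≤ f := by
    by_contra hef
    push_neg at hef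
    have hkey := (fib_mul_modEq α (by omega) (t - 1)).1
    rw [show t - 1 + 1 = t by omega] at hkey
    rw [← ht] at hkey
    have hdvd2 : p ^ (f + 1) ∣ Nat.fib α ^ 2 := by
      calc p ^ (f + 1) ∣ p ^ (2 * f) := pow_dvd_pow p (by omega)
        _ = (p ^ f) ^ 2 := by rw [← pow_mul, mul_comm]
        _ ∣ Nat.fib α ^ 2 := pow_dvd_pow_of_dvd pow_padicValNat_dvd 2
    have hmod : Nat.fib (pSubEps p) ≡ t * Nat.fib α * Nat.fib (α - 1) ^ (t - 1)
        [MOD p ^ (f + 1)] := Nat.ModEq.of_dvd hdvd2 hkey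
    have hd1 : p ^ (f + 1) ∣ Nat.fib (pSubEps p) :=
      dvd_trans (pow_dvd_pow p (by omega)) hpe
    have hd2 : p ^ (f + 1) ∣ t * Nat.fib α * Nat.fib (α - 1) ^ (t - 1) :=
      (Nat.modEq_zero_iff_dvd).mp ((hmod.symm).trans (Nat.modEq_zero_iff_dvd.mpr hd1))
    rw [show t * Nat.fib α * Nat.fib (α - 1) ^ (t - 1) =
        Nat.fib α * (t * Nat.fib (α - 1) ^ (t - 1)) by ring] at hd2
    have hcop : Nat.Coprime (p ^ (f + 1)) (t * Nat.fib (α - 1) ^ (t - 1)) :=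
      Nat.Coprime.pow_left _ ((hp.coprime_iff_not_dvd.mpr hpt).mul_right
        ((hp.coprime_iff_not_dvd.mpr hpd).pow_right _))
    have hfin : p ^ (f + 1) ∣ Nat.fib α := hcop.dvd_of_dvd_mul_right hd2
    have := (padicValNat_dvd_iff_le hfibα0).mp hfin
    omega
  -- p ^ e divides fib P
  have hA : p ^ e ∣ Nat.fib P := by
    calc p ^ e ∣ p ^ f := pow_dvd_pow p hef
      _ ∣ Nat.fib α := pow_padicValNat_dvd
      _ ∣ Nat.fib P := Nat.fib_dvd α P (hαdvd P hP1 hpP)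
  -- fib (P + 1) ≡ 1 mod p
  have hc1 : 1 ≤ Nat.fib (P + 1) := Nat.fib_pos.mpr (by omega)
  have hc1p : Nat.fib (P + 1) ≡ 1 [MOD p] := by
    have h1 := hPfib 1
    rw [show 1 + P = P + 1 by omega] at h1
    simpa using h1
  -- Cassini's identity at P - 1
  have hcas := cassini_aux (P - 1)
  rw [show P - 1 + 2 = P + 1 by omega, show P - 1 + 1 = P by omega] at hcas
  have eP : Nat.fib (P + 1) = Nat.fib (P - 1) + Nat.fib P := by
    conv_lhs => rw [show P + 1 = (P - 1) + 2 by omega]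
    rw [Nat.fib_add_two, show P - 1 + 1 = P by omega]
  -- P is even
  have hPeven : P % 2 = 0 := by
    by_contra hodd
    have hev : Even (P - 1) := Nat.even_iff.mpr (by omega)
    rw [Even.neg_one_pow hev] at hcas
    have hcast := congrArg (fun z : ℤ => (z : ZMod p)) hcas
    push_cast at hcast
    have hA0 : (Nat.fib P : ZMod p) = 0 := (ZMod.natCast_eq_zero_iff _ _).mpr hpP
    have hone : (Nat.fib (P + 1) : ZMod p) = 1 := by
      have := (ZMod.natCast_eq_natCast_iff _ _ _).mpr hc1p
      simpa using this
    have hdone : (Nat.fib (P - 1) : ZMod p) = 1 := by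
      have := congrArg (fun k : ℕ => (k : ZMod p)) eP
      push_cast at this
      rw [hA0, hone] at this
      simpa using this.symm
    rw [hA0, hone, hdone] at hcast
    have h2 : ((2 : ℕ) : ZMod p) = 0 := by push_cast; linear_combination hcast
    have := (ZMod.natCast_eq_zero_iff 2 p).mp h2
    have := Nat.le_of_dvd (by omega) this
    omega
  -- fib (P + 1) ≡ 1 mod p ^ e
  have hodd' : Odd (P - 1) := Nat.odd_iff.mpr (by omega)
  rw [Odd.neg_one_pow hodd'] at hcas
  have hcast := congrArg (fun z : ℤ => (z : ZMod (p ^ e))) hcas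
  push_cast at hcast
  have hA0 : (Nat.fib P : ZMod (p ^ e)) = 0 := (ZMod.natCast_eq_zero_iff _ _).mpr hA
  have hdc : (Nat.fib (P - 1) : ZMod (p ^ e)) = (Nat.fib (P + 1) : ZMod (p ^ e)) := by
    have := congrArg (fun k : ℕ => (k : ZMod (p ^ e))) eP
    push_cast at this
    rw [hA0] at this
    simpa using this.symm
  rw [hA0, hdc] at hcast
  have hsq : Nat.fib (P + 1) ^ 2 ≡ 1 [MOD p ^ e] := by
    rw [← ZMod.natCast_eq_natCast_iff]
    push_cast
    linear_combination hcast
  have hdvdsq : p ^ e ∣ Nat.fib (P + 1) ^ 2 - 1 :=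
    (Nat.modEq_iff_dvd' (by nlinarith)).mp hsq.symm
  rw [show Nat.fib (P + 1) ^ 2 - 1 = Nat.fib (P + 1) ^ 2 - 1 ^ 2 by norm_num,
    Nat.sq_sub_sq] at hdvdsq
  have hpc1 : ¬ p ∣ Nat.fib (P + 1) + 1 := by
    intro hd
    have hd' : p ∣ Nat.fib (P + 1) - 1 := (Nat.modEq_iff_dvd' hc1).mp hc1p.symm
    have : p ∣ 2 := by
      have := Nat.dvd_sub hd hd'
      rwa [show Nat.fib (P + 1) + 1 - (Nat.fib (P + 1) - 1) = 2 by omega] at this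
    have := Nat.le_of_dvd (by omega) this
    omega
  have hcop : Nat.Coprime (p ^ e) (Nat.fib (P + 1) + 1) :=
    Nat.Coprime.pow_left _ (hp.coprime_iff_not_dvd.mpr hpc1)
  have hc1Q : Nat.fib (P + 1) ≡ 1 [MOD p ^ e] := by
    have hfin : p ^ e ∣ Nat.fib (P + 1) - 1 := hcop.dvd_of_dvd_mul_left hdvdsq
    exact ((Nat.modEq_iff_dvd' hc1).mpr hfin).symm
  -- the periodicity step mod p ^ e
  have hstep : ∀ j, Nat.fib (j + P) ≡ Nat.fib j [MOD p ^ e] := by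
    intro j
    cases j with
    | zero => simpa using Nat.modEq_zero_iff_dvd.mpr hA
    | succ i =>
      rw [show i + 1 + P = i + P + 1 by omega, Nat.fib_add]
      calc Nat.fib i * Nat.fib P + Nat.fib (i + 1) * Nat.fib (P + 1)
          ≡ Nat.fib i * 0 + Nat.fib (i + 1) * 1 [MOD p ^ e] :=
            Nat.ModEq.add ((Nat.ModEq.refl _).mul (Nat.modEq_zero_iff_dvd.mpr hA))
              ((Nat.ModEq.refl _).mul hc1Q)
        _ = Nat.fib (i + 1) := by ring
  have hper : ∀ k j, Nat.fib (j + k * P) ≡ Nat.fib j [MOD p ^ e] := by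
    intro k
    induction k with
    | zero => intro j; simpa using Nat.ModEq.refl (Nat.fib j)
    | succ k ih =>
      intro j
      rw [show j + (k + 1) * P = j + k * P + P by ring]
      exact (hstep (j + k * P)).trans (ih j)
  -- conclusion
  rcases le_total n m with h1 | h1
  · obtain ⟨k, hk⟩ := (Nat.modEq_iff_dvd' h1).mp h.symm
    have hm : m = P * k + n := (Nat.sub_eq_iff_eq_add h1).mp hk
    rw [hm, show P * k + n = n + k * P by ring]
    exact (ZMod.natCast_eq_natCast_iff _ _ _).mpr (hper k n)
  · obtain ⟨k, hk⟩ := (Nat.modEq_iff_dvd' h1).mp h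
    have hn : n = P * k + m := (Nat.sub_eq_iff_eq_add h1).mp hk
    rw [hn, show P * k + m = m + k * P by ring]
    exact ((ZMod.natCast_eq_natCast_iff _ _ _).mpr (hper k m)).symm
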